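/- Let X be a finite set, n ≥ 1, p : X → ℝ a strictly positive p.m.f., and q_i : X → (0,1] for i = 1..n. Consider the primal problem P: maximize ∑_x β(x) over β : X → ℝ and α in the probability simplex over {1..n}, subject to β(x) ≤ α_i·p(x)/q_i(x) for all i,x; and the dual problem D: minimize μ over μ ∈ ℝ and s_{i,x} ≥ 0 with ∑_i s_{i,x} = 1 for all x and ∑_x (p(x)/q_i(x))·s_{i,x} ≤ μ for all i. Then the optimal values of P and D are equal. -/

import Mathlib

open Finset

lemma lp_duality_aux {X : Type*} [Fintype X] [Nonempty X] {n : ℕ} (hn : 1 ≤ n)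
    (c : Fin n → X → ℝ) (hc : ∀ i x, 0 < c i x) :
    sSup {v : ℝ | ∃ (β : X → ℝ) (α : Fin n → ℝ),
        (∀ i, 0 ≤ α i) ∧ (∑ i, α i) = 1 ∧
        (∀ i x, β x ≤ α i * c i x) ∧ v = ∑ x, β x}
      = sInf {μ : ℝ | ∃ s : Fin n → X → ℝ,
        (∀ i x, 0 ≤ s i x) ∧ (∀ x, ∑ i, s i x = 1) ∧
        (∀ i, ∑ x, c i x * s i x ≤ μ)} := by
  classical
  have hn0 : (n : ℝ) ≠ 0 := Nat.cast_ne_zero.mpr (by omega)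
  have hn0' : (0:ℝ) < (n:ℝ)⁻¹ := by positivity
  set i₀ : Fin n := ⟨0, hn⟩ with hi₀
  set S : Set ℝ := {v : ℝ | ∃ (β : X → ℝ) (α : Fin n → ℝ),
        (∀ i, 0 ≤ α i) ∧ (∑ i, α i) = 1 ∧
        (∀ i x, β x ≤ α i * c i x) ∧ v = ∑ x, β x} with hSdef
  set T : Set ℝ := {μ : ℝ | ∃ s : Fin n → X → ℝ,
        (∀ i x, 0 ≤ s i x) ∧ (∀ x, ∑ i, s i x = 1) ∧
        (∀ i, ∑ x, c i x * s i x ≤ μ)} with hTdef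
  -- uniform distributions
  have hunif : ∑ _i : Fin n, ((n:ℝ)⁻¹) = 1 := by
    simp [Finset.sum_const, Finset.card_univ, mul_comm]
    field_simp
  -- T nonempty
  have hμ₀T : (∑ i : Fin n, ∑ x, c i x) ∈ T := by
    refine ⟨fun _ _ => (n:ℝ)⁻¹, fun _ _ => le_of_lt hn0', fun x => hunif, fun i => ?_⟩
    calc ∑ x, c i x * (n:ℝ)⁻¹ ≤ ∑ x, c i x := by
          refine Finset.sum_le_sum fun x _ => ?_
          have h1 : ((n:ℝ)⁻¹) ≤ 1 := by
            rw [inv_le_one_iff₀]; right; exact_mod_cast hn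
          nlinarith [hc i x]
      _ ≤ ∑ j : Fin n, ∑ x, c j x :=
          Finset.single_le_sum (fun j _ => Finset.sum_nonneg fun x _ => (hc j x).le)
            (Finset.mem_univ i)
  have hTne : T.Nonempty := ⟨_, hμ₀T⟩
  have hTbdd : BddBelow T := by
    refine ⟨0, ?_⟩
    rintro μ ⟨s, hs0, hs1, hsμ⟩
    exact le_trans (Finset.sum_nonneg fun x _ => mul_nonneg (hc i₀ x).le (hs0 i₀ x)) (hsμ i₀)
  -- weak duality
  have weak : ∀ v ∈ S, ∀ μ ∈ T, v ≤ μ := by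
    rintro v ⟨β, α, hα0, hα1, hβ, rfl⟩ μ ⟨s, hs0, hs1, hsμ⟩
    calc ∑ x, β x ≤ ∑ x, ∑ i, s i x * (α i * c i x) := by
          refine Finset.sum_le_sum fun x _ => ?_
          calc β x = ∑ i, s i x * β x := by rw [← Finset.sum_mul, hs1 x, one_mul]
            _ ≤ ∑ i, s i x * (α i * c i x) :=
              Finset.sum_le_sum fun i _ => mul_le_mul_of_nonneg_left (hβ i x) (hs0 i x)
      _ = ∑ i, α i * ∑ x, c i x * s i x := by
          rw [Finset.sum_comm]
          refine Finset.sum_congr rfl fun i _ => ?_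
          rw [Finset.mul_sum]
          exact Finset.sum_congr rfl fun x _ => by ring
      _ ≤ ∑ i, α i * μ :=
          Finset.sum_le_sum fun i _ => mul_le_mul_of_nonneg_left (hsμ i) (hα0 i)
      _ = μ := by rw [← Finset.sum_mul, hα1, one_mul]
  have hSne : (0:ℝ) ∈ S := by
    refine ⟨fun _ => 0, fun _ => (n:ℝ)⁻¹, fun _ => hn0'.le, hunif, fun i x => ?_, by simp⟩
    exact mul_nonneg hn0'.le (hc i x).le
  have hSbdd : BddAbove S := ⟨_, fun v hv => weak v hv _ hμ₀T⟩
  set μs : ℝ := sInf T with hμs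
  -- the dual image set A and the open set B
  set A : Set (Fin n → ℝ) := {a | ∃ s : Fin n → X → ℝ, (∀ i x, 0 ≤ s i x) ∧
      (∀ x, ∑ i, s i x = 1) ∧ a = fun i => ∑ x, c i x * s i x} with hAdef
  set B : Set (Fin n → ℝ) := {b | ∀ i, b i < μs} with hBdef
  have hBeq : B = ⋂ i, {b : Fin n → ℝ | b i < μs} := by
    ext b; simp [hBdef, Set.mem_iInter]
  have hBopen : IsOpen B := by
    rw [hBeq]
    exact isOpen_iInter_of_finite fun i => isOpen_lt (continuous_apply i) continuous_const
  have hBconv : Convex ℝ B := by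
    rw [hBeq]
    exact convex_iInter fun i => convex_halfSpace_lt ⟨fun a b => rfl, fun r a => rfl⟩ _
  have hAconv : Convex ℝ A := by
    rintro a ⟨s, hs0, hs1, rfl⟩ b ⟨r, hr0, hr1, rfl⟩ t t' ht ht' htt
    refine ⟨fun i x => t * s i x + t' * r i x,
      fun i x => add_nonneg (mul_nonneg ht (hs0 i x)) (mul_nonneg ht' (hr0 i x)),
      fun x => by rw [Finset.sum_add_distrib, ← Finset.mul_sum, ← Finset.mul_sum, hs1 x, hr1 x]; linarith,
      ?_⟩
    funext i
    simp only [Pi.add_apply, Pi.smul_apply, smul_eq_mul]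
    rw [Finset.mul_sum, Finset.mul_sum, ← Finset.sum_add_distrib]
    exact Finset.sum_congr rfl fun x _ => by ring
  have hdisj : Disjoint B A := by
    rw [Set.disjoint_left]
    rintro b hb ⟨s, hs0, hs1, rfl⟩
    have hne : (Finset.univ : Finset (Fin n)).Nonempty := ⟨i₀, Finset.mem_univ _⟩
    have hmem : Finset.univ.sup' hne (fun i => ∑ x, c i x * s i x) ∈ T :=
      ⟨s, hs0, hs1, fun i => Finset.le_sup' (fun i => ∑ x, c i x * s i x) (Finset.mem_univ i)⟩
    have h2 : Finset.univ.sup' hne (fun i => ∑ x, c i x * s i x) < μs :=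
      (Finset.sup'_lt_iff hne).mpr fun i _ => hb i
    exact absurd (csInf_le hTbdd hmem) (not_le.mpr h2)
  obtain ⟨f, u, hfB, hfA⟩ := geometric_hahn_banach_open hBconv hBopen hAconv hdisj
  set α' : Fin n → ℝ := fun i => f (fun j => if i = j then (1:ℝ) else 0) with hα'def
  have hf : ∀ b : Fin n → ℝ, f b = ∑ i, b i * α' i := by
    intro b
    conv_lhs => rw [pi_eq_sum_univ b, map_sum]
    exact Finset.sum_congr rfl fun i _ => by rw [map_smul]; simp [smul_eq_mul, hα'def]
  -- nonnegativity of α'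
  have hα'0 : ∀ i, 0 ≤ α' i := by
    intro i
    by_contra h
    push_neg at h
    set t : ℝ := max ((u - (μs - 1) * ∑ j, α' j) / (-α' i)) 0 with htdef
    have ht0 : 0 ≤ t := le_max_right _ _
    set b : Fin n → ℝ := fun j => (μs - 1) - (if j = i then t else 0) with hbdef
    have hbB : b ∈ B := by
      intro j
      simp only [hbdef]
      by_cases hj : j = i <;> simp [hj] <;> linarith
    have hfb : f b = (μs - 1) * (∑ j, α' j) - t * α' i := by
      rw [hf b]
      have : ∀ j, b j * α' j = (μs - 1) * α' j - (if j = i then t * α' j else 0) := by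
        intro j
        by_cases hj : j = i <;> simp [hbdef, hj] <;> ring
      rw [Finset.sum_congr rfl fun j _ => this j, Finset.sum_sub_distrib, ← Finset.mul_sum,
        Finset.sum_ite_eq' Finset.univ i (fun j => t * α' j)]
      simp
    have hge : u ≤ f b := by
      rw [hfb]
      have h1 : (u - (μs - 1) * ∑ j, α' j) / (-α' i) ≤ t := le_max_left _ _
      have h2 : u - (μs - 1) * ∑ j, α' j ≤ t * (-α' i) := by
        rwa [div_le_iff₀ (by linarith : (0:ℝ) < -α' i)] at h1
      linarith
    exact absurd (hfB b hbB) (not_lt.mpr hge)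
  -- A nonempty
  have hAne : (fun i => ∑ x, c i x * (n:ℝ)⁻¹) ∈ A :=
    ⟨fun _ _ => (n:ℝ)⁻¹, fun _ _ => hn0'.le, fun x => hunif, rfl⟩
  -- positivity of the sum
  have hsumpos : 0 < ∑ j, α' j := by
    rcases lt_or_eq_of_le (Finset.sum_nonneg fun j _ => hα'0 j) with h | h
    · exact h
    exfalso
    have hall : ∀ j ∈ Finset.univ, α' j = 0 :=
      (Finset.sum_eq_zero_iff_of_nonneg fun j _ => hα'0 j).mp h.symm
    have hf0 : ∀ b : Fin n → ℝ, f b = 0 := by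
      intro b; rw [hf b]
      exact Finset.sum_eq_zero fun j _ => by rw [hall j (Finset.mem_univ j), mul_zero]
    have h1 : (0:ℝ) < u := by
      have := hfB (fun _ => μs - 1) (fun i => by simp)
      rwa [hf0] at this
    have h2 : u ≤ 0 := by
      have := hfA _ hAne
      rwa [hf0] at this
    linarith
  -- u is at least μs * Σ
  have hu : μs * (∑ j, α' j) ≤ u := by
    by_contra h
    push_neg at h
    set ε : ℝ := (μs * (∑ j, α' j) - u) / (2 * ∑ j, α' j) with hε
    have hεpos : 0 < ε := by
      apply div_pos (by linarith) (by linarith)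
    have hb : (fun _ : Fin n => μs - ε) ∈ B := fun i => by simp; linarith
    have hfb : f (fun _ => μs - ε) = (μs - ε) * ∑ j, α' j := by
      rw [hf, ← Finset.mul_sum]
    have hepsS : ε * (∑ j, α' j) = (μs * (∑ j, α' j) - u) / 2 := by
      rw [hε]; field_simp
    have := hfB _ hb
    rw [hfb] at this
    nlinarith
  have hA' : ∀ a ∈ A, μs * (∑ j, α' j) ≤ ∑ i, a i * α' i := by
    intro a ha
    have := hfA a ha
    rw [hf a] at this
    linarith
  -- build primal solution
  set Sal : ℝ := ∑ j, α' j with hSal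
  set α : Fin n → ℝ := fun i => α' i / Sal with hαdef
  have hα0 : ∀ i, 0 ≤ α i := fun i => div_nonneg (hα'0 i) hsumpos.le
  have hα1 : ∑ i, α i = 1 := by
    rw [hαdef]
    rw [← Finset.sum_div]
    exact div_self (ne_of_gt hsumpos)
  have hminex : ∀ x : X, ∃ j : Fin n, ∀ i : Fin n, α j * c j x ≤ α i * c i x := by
    intro x
    obtain ⟨j, -, hj⟩ := Finset.exists_min_image Finset.univ (fun i => α i * c i x)
      ⟨i₀, Finset.mem_univ _⟩
    exact ⟨j, fun i => hj i (Finset.mem_univ i)⟩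
  choose J hJ using hminex
  set sJ : Fin n → X → ℝ := fun i x => if i = J x then 1 else 0 with hsJ
  have hsJA : (fun i => ∑ x, c i x * sJ i x) ∈ A := by
    refine ⟨sJ, fun i x => by by_cases h : i = J x <;> simp [hsJ, h], fun x => by simp [hsJ], rfl⟩
  have hkey : ∑ i, (∑ x, c i x * sJ i x) * α' i = ∑ x, c (J x) x * α' (J x) := by
    have : ∀ i, (∑ x, c i x * sJ i x) * α' i = ∑ x, (if i = J x then c i x * α' i else 0) := by
      intro i
      rw [Finset.sum_mul]
      refine Finset.sum_congr rfl fun x _ => ?_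
      by_cases h : i = J x <;> simp [hsJ, h]
    rw [Finset.sum_congr rfl fun i _ => this i, Finset.sum_comm]
    refine Finset.sum_congr rfl fun x _ => ?_
    rw [Finset.sum_ite_eq' Finset.univ (J x) (fun i => c i x * α' i)]
    simp
  have hμsle : μs * Sal ≤ ∑ x, c (J x) x * α' (J x) := by
    rw [← hkey]; exact hA' _ hsJA
  set β : X → ℝ := fun x => α (J x) * c (J x) x with hβdef
  have hvS : (∑ x, β x) ∈ S := ⟨β, α, hα0, hα1, fun i x => hJ x i, rfl⟩
  have hvge : μs ≤ ∑ x, β x := by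
    have hsum : ∑ x, β x = (∑ x, c (J x) x * α' (J x)) / Sal := by
      rw [Finset.sum_div]
      refine Finset.sum_congr rfl fun x _ => ?_
      rw [hβdef, hαdef]
      ring
    rw [hsum, le_div_iff₀ hsumpos]
    exact hμsle
  refine le_antisymm ?_ ?_
  · exact csSup_le ⟨0, hSne⟩ fun v hv => le_csInf hTne fun μ hμ => weak v hv μ hμ
  · exact le_trans hvge (le_csSup hSbdd hvS)

theorem stmt_7 (X : Type*) [Fintype X] [Nonempty X] (n : ℕ) (hn : 1 ≤ n)
    (p : X → ℝ) (q : Fin n → X → ℝ)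
    (hp : ∀ x, 0 < p x) (hpsum : ∑ x, p x = 1)
    (hq : ∀ i x, 0 < q i x) (hq1 : ∀ i x, q i x ≤ 1) :
    sSup {v : ℝ | ∃ (β : X → ℝ) (α : Fin n → ℝ),
        (∀ i, 0 ≤ α i) ∧ (∑ i, α i) = 1 ∧
        (∀ i x, β x ≤ α i * p x / q i x) ∧
        v = ∑ x, β x}
      = sInf {μ : ℝ | ∃ s : Fin n → X → ℝ,
        (∀ i x, 0 ≤ s i x) ∧ (∀ x, ∑ i, s i x = 1) ∧
        (∀ i, ∑ x, p x / q i x * s i x ≤ μ)} := by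
  simp only [mul_div_assoc]
  exact lp_duality_aux hn (fun i x => p x / q i x) (fun i x => div_pos (hp x) (hq i x))
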